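/- If Γ is a finite abelian group and S ∈ B(Γ), then every d-fold sumset dS = S + S + ... + S (d times, d ≥ 1) belongs to B(Γ). -/

import Mathlib

open Pointwise

/-- The Boolean algebra of subsets of `Γ` generated by the subgroups of `Γ`. -/
inductive InB (Γ : Type*) [AddGroup Γ] : Set Γ → Prop
  | subgroup (H : AddSubgroup Γ) : InB Γ (H : Set Γ)
  | compl {S : Set Γ} : InB Γ S → InB Γ Sᶜ
  | union {S T : Set Γ} : InB Γ S → InB Γ T → InB Γ (S ∪ T)

/-- `Atom a` is the set of elements generating the same cyclic subgroup as `a`. -/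
def Atom {Γ : Type*} [AddGroup Γ] (a : Γ) : Set Γ :=
  {b | AddSubgroup.zmultiples a = AddSubgroup.zmultiples b}

section Aux

variable {Γ : Type*} [AddGroup Γ]

lemma InB.univ : InB Γ (Set.univ) := by
  simpa using InB.subgroup (⊤ : AddSubgroup Γ)

lemma InB.empty : InB Γ (∅ : Set Γ) := by
  simpa using (InB.univ (Γ := Γ)).compl

lemma InB.inter {S T : Set Γ} (hS : InB Γ S) (hT : InB Γ T) : InB Γ (S ∩ T) := by
  simpa [Set.compl_union, compl_compl] using (hS.compl.union hT.compl).compl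

lemma InB.biUnion {ι : Type*} (s : Finset ι) (f : ι → Set Γ)
    (h : ∀ i ∈ s, InB Γ (f i)) : InB Γ (⋃ i ∈ s, f i) := by
  classical
  induction s using Finset.induction with
  | empty => simpa using InB.empty
  | @insert a s ha ih =>
    rw [Finset.set_biUnion_insert]
    exact (h a (Finset.mem_insert_self a s)).union
      (ih fun i hi => h i (Finset.mem_insert_of_mem hi))

lemma InB.iUnion {ι : Type*} [Finite ι] (f : ι → Set Γ)
    (h : ∀ i, InB Γ (f i)) : InB Γ (⋃ i, f i) := by
  cases nonempty_fintype ι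
  have := InB.biUnion (Finset.univ : Finset ι) f (fun i _ => h i)
  simpa using this

lemma InB_atom [Fintype Γ] (a : Γ) : InB Γ (Atom a) := by
  classical
  have : Finite (AddSubgroup Γ) :=
    Finite.of_injective (fun H => (H : Set Γ)) fun _ _ h => SetLike.coe_injective h
  have heq : Atom a = (AddSubgroup.zmultiples a : Set Γ) ∩
      (⋃ H : {H : AddSubgroup Γ // H < AddSubgroup.zmultiples a}, ((H : AddSubgroup Γ) : Set Γ))ᶜ := by
    ext b
    simp only [Atom, Set.mem_setOf_eq, Set.mem_inter_iff, Set.mem_compl_iff, Set.mem_iUnion,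
      SetLike.mem_coe, not_exists]
    constructor
    · intro h
      refine ⟨h ▸ AddSubgroup.mem_zmultiples b, ?_⟩
      rintro ⟨H, hH⟩ hbH
      have : AddSubgroup.zmultiples a ≤ H := h ▸ AddSubgroup.zmultiples_le.mpr hbH
      exact absurd (lt_of_le_of_lt this hH) (lt_irrefl _)
    · rintro ⟨hb, hn⟩
      have hle : AddSubgroup.zmultiples b ≤ AddSubgroup.zmultiples a :=
        AddSubgroup.zmultiples_le.mpr hb
      rcases eq_or_lt_of_le hle with heq | hlt
      · exact heq.symm
      · exact absurd (AddSubgroup.mem_zmultiples b) (hn ⟨_, hlt⟩)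
  rw [heq]
  exact (InB.subgroup _).inter (InB.iUnion (fun (H : {H : AddSubgroup Γ // H < AddSubgroup.zmultiples a}) => ((H : AddSubgroup Γ) : Set Γ)) fun H => InB.subgroup H.1).compl

lemma atomClosed_of_InB {S : Set Γ} (h : InB Γ S) :
    ∀ a ∈ S, ∀ b, AddSubgroup.zmultiples a = AddSubgroup.zmultiples b → b ∈ S := by
  induction h with
  | subgroup H =>
    intro a ha b hab
    have : AddSubgroup.zmultiples b ≤ H := hab ▸ AddSubgroup.zmultiples_le.mpr ha
    exact this (AddSubgroup.mem_zmultiples b)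
  | compl hS ih =>
    intro a ha b hab hbS
    exact ha (ih b hbS a hab.symm)
  | union hS hT ihS ihT =>
    intro a ha b hab
    rcases ha with ha | ha
    · exact Or.inl (ihS a ha b hab)
    · exact Or.inr (ihT a ha b hab)

lemma InB_of_atomClosed [Fintype Γ] {S : Set Γ}
    (h : ∀ a ∈ S, ∀ b, AddSubgroup.zmultiples a = AddSubgroup.zmultiples b → b ∈ S) :
    InB Γ S := by
  classical
  have hSeq : S = ⋃ a ∈ (Set.toFinite S).toFinset, Atom a := by
    ext b
    simp only [Set.mem_iUnion, Set.Finite.mem_toFinset]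
    constructor
    · exact fun hb => ⟨b, hb, rfl⟩
    · rintro ⟨a, ha, hab⟩
      exact h a ha b hab
  rw [hSeq]
  exact InB.biUnion _ _ fun a _ => InB_atom a

end Aux

section NumTheory

variable {Γ : Type*} [AddCommGroup Γ] [Fintype Γ]

lemma exists_coprime_nsmul {x y : Γ}
    (hxy : AddSubgroup.zmultiples x = AddSubgroup.zmultiples y) :
    ∃ m : ℕ, Nat.Coprime m (Fintype.card Γ) ∧ m • x = y := by
  have hn : NeZero (Fintype.card Γ) := ⟨Fintype.card_ne_zero⟩
  obtain ⟨k, hk⟩ := AddSubgroup.mem_zmultiples_iff.mp (hxy ▸ AddSubgroup.mem_zmultiples y)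
  obtain ⟨l, hl⟩ := AddSubgroup.mem_zmultiples_iff.mp (hxy.symm ▸ AddSubgroup.mem_zmultiples x)
  set r := addOrderOf x with hr
  have hrk : (r : ℤ) ∣ l * k - 1 := by
    rw [hr, addOrderOf_dvd_iff_zsmul_eq_zero, sub_smul, mul_smul, hk, hl, one_smul, sub_self]
  have hu : IsUnit (k : ZMod r) := by
    refine IsUnit.of_mul_eq_one (l : ZMod r) ?_
    have h0 : ((l * k - 1 : ℤ) : ZMod r) = 0 :=
      (ZMod.intCast_zmod_eq_zero_iff_dvd _ r).mpr hrk
    push_cast at h0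
    have := sub_eq_zero.mp h0
    rw [mul_comm] at this
    exact this
  obtain ⟨ur, hur⟩ := hu
  have hdvd : r ∣ Fintype.card Γ := addOrderOf_dvd_card
  obtain ⟨u, hu2⟩ := ZMod.unitsMap_surjective hdvd ur
  set m : ℕ := ((u : ZMod (Fintype.card Γ))).val with hm
  refine ⟨m, ZMod.val_coe_unit_coprime u, ?_⟩
  have hcast : ((m : ℤ) : ZMod r) = (k : ZMod r) := by
    have h1 : (ZMod.unitsMap hdvd u : ZMod r) = (ur : ZMod r) := by rw [hu2]
    rw [ZMod.unitsMap_def, Units.coe_map, MonoidHom.coe_coe, ZMod.castHom_apply] at h1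
    rw [← hur, ← h1]
    push_cast [hm]
    rw [ZMod.natCast_val]
  have hdvd2 : (r : ℤ) ∣ (m : ℤ) - k := by
    rwa [← ZMod.intCast_zmod_eq_zero_iff_dvd, Int.cast_sub, sub_eq_zero]
  have h0 : ((m : ℤ) - k) • x = 0 := addOrderOf_dvd_iff_zsmul_eq_zero.mp hdvd2
  have : (m : ℤ) • x = y := by
    rw [sub_smul, sub_eq_zero] at h0
    rw [h0, hk]
  simpa [natCast_zsmul] using this

lemma zmultiples_nsmul_eq {m : ℕ} (hm : Nat.Coprime m (Fintype.card Γ)) (s : Γ) :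
    AddSubgroup.zmultiples (m • s) = AddSubgroup.zmultiples s := by
  have hn : NeZero (Fintype.card Γ) := ⟨Fintype.card_ne_zero⟩
  apply le_antisymm
  · rw [AddSubgroup.zmultiples_le]
    exact AddSubgroup.mem_zmultiples_iff.mpr ⟨(m : ℤ), by simp [natCast_zsmul]⟩
  · rw [AddSubgroup.zmultiples_le]
    set u : (ZMod (Fintype.card Γ))ˣ := ZMod.unitOfCoprime m hm with hu
    set c : ℕ := ((u⁻¹ : (ZMod (Fintype.card Γ))ˣ) : ZMod (Fintype.card Γ)).val with hc
    have hmod : c * m ≡ 1 [MOD Fintype.card Γ] := by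
      rw [← ZMod.natCast_eq_natCast_iff]
      push_cast
      rw [hc, ZMod.natCast_val, ZMod.cast_id]
      have : ((u : ZMod (Fintype.card Γ))) = (m : ZMod (Fintype.card Γ)) :=
        ZMod.coe_unitOfCoprime m hm
      rw [← this]
      simp [← Units.val_mul]
    have hcard : (Fintype.card Γ) • s = 0 := card_nsmul_eq_zero
    have : (c * m) • s = s := by
      have h1 : (c * m) • s = ((c * m) % Fintype.card Γ) • s :=
        nsmul_eq_mod_nsmul _ hcard
      have h2 : (1 : ℕ) • s = ((1 : ℕ) % Fintype.card Γ) • s :=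
        nsmul_eq_mod_nsmul _ hcard
      rw [h1, hmod, ← h2, one_smul]
    exact AddSubgroup.mem_zmultiples_iff.mpr
      ⟨(c : ℤ), by rw [natCast_zsmul, ← mul_smul]; exact this⟩

lemma nsmul_mem_nsmul_set {S : Set Γ} (m : ℕ) (hS' : ∀ s ∈ S, m • s ∈ S) :
    ∀ d : ℕ, ∀ x ∈ d • S, m • x ∈ d • S := by
  intro d
  induction d with
  | zero =>
    intro x hx
    rw [zero_nsmul] at hx ⊢
    rw [Set.mem_zero] at hx ⊢
    rw [hx, smul_zero]
  | succ n ih =>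
    intro x hx
    rw [succ_nsmul] at hx ⊢
    obtain ⟨a, ha, b, hb, rfl⟩ := Set.mem_add.mp hx
    exact Set.mem_add.mpr ⟨m • a, ih a ha, m • b, hS' b hb, (smul_add m a b).symm⟩

end NumTheory

theorem nsmul_sumset_mem_B {Γ : Type*} [AddCommGroup Γ] [Fintype Γ]
    (S : Set Γ) (hS : InB Γ S) (hne : S.Nonempty) (d : ℕ) (hd : 1 ≤ d) :
    InB Γ (d • S) := by
  apply InB_of_atomClosed
  intro a ha b hab
  obtain ⟨m, hm, hmx⟩ := exists_coprime_nsmul hab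
  have hS' : ∀ s ∈ S, m • s ∈ S := fun s hs =>
    atomClosed_of_InB hS s hs (m • s) (zmultiples_nsmul_eq hm s).symm
  exact hmx ▸ nsmul_mem_nsmul_set m hS' d a ha
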